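/- If G is a K_{1,r}-free graph with r ≥ 3, then for every positive integer k, ι'_k(G) ≤ (r − 2)(ι_k(G) − 1) + 1. -/

import Mathlib

open SimpleGraph

variable {V : Type*}

/-- The closed neighborhood `N[S]` of a set of vertices. -/
def closedNbhd (G : SimpleGraph V) (S : Set V) : Set V :=
  {v | v ∈ S ∨ ∃ u ∈ S, G.Adj u v}

/-- The open neighborhood `N(S)` of a set of vertices. -/
def openNbhd (G : SimpleGraph V) (S : Set V) : Set V :=
  {v | ∃ u ∈ S, G.Adj u v}

/-- A set is independent if no two of its vertices are adjacent. -/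
def IsIndep (G : SimpleGraph V) (S : Set V) : Prop :=
  S.Pairwise fun u w => ¬ G.Adj u w

/-- `S` is `K_k`-isolating: `G - N[S]` contains no clique of size `k`. -/
def IsIsolating (G : SimpleGraph V) (k : ℕ) (S : Set V) : Prop :=
  ∀ T : Finset V, (↑T : Set V) ∩ closedNbhd G S = ∅ → G.IsClique ↑T → T.card ≠ k

/-- The `K_k`-isolation number `ι_k(G)`. -/
noncomputable def iota [Fintype V] (G : SimpleGraph V) (k : ℕ) : ℕ :=
  sInf {n | ∃ S : Finset V, S.card = n ∧ IsIsolating G k ↑S}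

/-- The independent `K_k`-isolation number `ι'_k(G)`. -/
noncomputable def iota' [Fintype V] (G : SimpleGraph V) (k : ℕ) : ℕ :=
  sInf {n | ∃ S : Finset V, S.card = n ∧ IsIsolating G k ↑S ∧ IsIndep G ↑S}

/-- A dominating set: every vertex lies in `N[S]`. -/
def IsDominating (G : SimpleGraph V) (S : Set V) : Prop :=
  ∀ v, v ∈ closedNbhd G S

/-- The domination number `γ(G)`. -/
noncomputable def gammaNum [Fintype V] (G : SimpleGraph V) : ℕ :=
  sInf {n | ∃ S : Finset V, S.card = n ∧ IsDominating G ↑S}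

/-- The independent domination number `i(G)`. -/
noncomputable def iNum [Fintype V] (G : SimpleGraph V) : ℕ :=
  sInf {n | ∃ S : Finset V, S.card = n ∧ IsDominating G ↑S ∧ IsIndep G ↑S}

/-- `G` is `K_{1,r}`-free: no induced subgraph isomorphic to the star `K_{1,r}`. -/
def K1rFree (G : SimpleGraph V) (r : ℕ) : Prop :=
  IsEmpty (completeBipartiteGraph (Fin 1) (Fin r) ↪g G)

/-- Degree of `v` inside the vertex subset `T`. -/
def degIn [DecidableEq V] (G : SimpleGraph V) [DecidableRel G.Adj] (T : Finset V) (v : V) : ℕ :=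
  (T.filter (G.Adj v)).card

/-- star bound -/
lemma star_bound (G : SimpleGraph V) (r : ℕ) (hfree : K1rFree G r) (v : V)
    (L : Finset V) (hadj : ∀ x ∈ L, G.Adj v x) (hind : IsIndep G ↑L) :
    L.card ≤ r - 1 := by
  by_contra h
  push_neg at h
  have hr : r ≤ L.card := by omega
  obtain ⟨t, htL, htc⟩ := Finset.exists_subset_card_eq hr
  have hcard : Fintype.card ↥t = r := by rw [Fintype.card_coe]; exact htc
  let e : ↥t ≃ Fin r := Fintype.equivFinOfCardEq hcard
  let g : Fin r → V := fun i => ((e.symm i : ↥t) : V)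
  have hgt : ∀ i, g i ∈ t := fun i => (e.symm i).2
  have hgL : ∀ i, g i ∈ L := fun i => htL (hgt i)
  have hginj : Function.Injective g := by
    intro i j hij
    exact (Equiv.injective e.symm) (Subtype.ext hij)
  have hgadj : ∀ i, G.Adj v (g i) := fun i => hadj _ (hgL i)
  have hgne : ∀ i, g i ≠ v := fun i h => G.irrefl (h ▸ hgadj i)
  have hgnadj : ∀ i j, i ≠ j → ¬ G.Adj (g i) (g j) := by
    intro i j hij
    exact hind (hgL i) (hgL j) (fun h => hij (hginj h))
  refine hfree.false ?_
  refine ⟨⟨Sum.elim (fun _ => v) g, ?_⟩, ?_⟩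
  · intro a b hab
    cases a with
    | inl a => cases b with
      | inl b => cases a; cases b; simp_all [Fin.ext_iff]; omega
      | inr b => simp only [Sum.elim_inl, Sum.elim_inr] at hab
                 exact absurd hab.symm (hgne b)
    | inr a => cases b with
      | inl b => simp only [Sum.elim_inl, Sum.elim_inr] at hab
                 exact absurd hab (hgne a)
      | inr b => simp only [Sum.elim_inr] at hab; exact congrArg Sum.inr (hginj hab)
  · intro a b
    cases a with
    | inl a => cases b with
      | inl b => simp; exact G.irrefl
      | inr b => simp [hgadj b]; exact hgadj b
    | inr a => cases b with
      | inl b => simp [(hgadj a).symm]; exact (hgadj a).symm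
      | inr b => constructor
                 · intro h
                   by_cases hab : a = b
                   · subst hab; exact absurd h G.irrefl
                   · exact absurd h (hgnadj a b hab)
                 · simp

lemma exists_max_indep (G : SimpleGraph V) [DecidableEq V] :
    ∀ (n : ℕ) (A M₀ : Finset V), (A \ M₀).card ≤ n → M₀ ⊆ A → IsIndep G ↑M₀ →
    ∃ M : Finset V, M₀ ⊆ M ∧ M ⊆ A ∧ IsIndep G ↑M ∧ ∀ u ∈ A, u ∈ closedNbhd G ↑M := by
  intro n
  induction n with
  | zero =>
    intro A M₀ hc hs hi
    have hAM : A ⊆ M₀ := by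
      intro a ha
      by_contra hnot
      have : a ∈ A \ M₀ := Finset.mem_sdiff.2 ⟨ha, hnot⟩
      have := Finset.card_pos.2 ⟨a, this⟩
      omega
    exact ⟨M₀, subset_rfl, hs, hi, fun u hu => Or.inl (hAM hu)⟩
  | succ n ih =>
    intro A M₀ hc hs hi
    by_cases hdom : ∀ u ∈ A, u ∈ closedNbhd G ↑M₀
    · exact ⟨M₀, subset_rfl, hs, hi, hdom⟩
    · push_neg at hdom
      obtain ⟨u, huA, hu⟩ := hdom
      have huM : u ∉ M₀ := fun h => hu (Or.inl h)
      have hnadj : ∀ w ∈ M₀, ¬ G.Adj w u := by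
        intro w hw hadj
        exact hu (Or.inr ⟨w, hw, hadj⟩)
      have hind' : IsIndep G ↑(insert u M₀) := by
        rw [Finset.coe_insert]
        apply hi.insert
        intro x hx _
        exact ⟨fun h => hnadj x hx h.symm, fun h => hnadj x hx h⟩
      have hsub' : insert u M₀ ⊆ A := Finset.insert_subset huA hs
      have hcard' : (A \ insert u M₀).card ≤ n := by
        have h1 : A \ insert u M₀ = (A \ M₀).erase u := by
          ext x
          simp [Finset.mem_sdiff, Finset.mem_erase, Finset.mem_insert]
          tauto
        rw [h1, Finset.card_erase_of_mem (Finset.mem_sdiff.2 ⟨huA, huM⟩)]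
        omega
      obtain ⟨M, hM1, hM2, hM3, hM4⟩ := ih A (insert u M₀) hcard' hsub' hind'
      exact ⟨M, (Finset.subset_insert u M₀).trans hM1, hM2, hM3, hM4⟩

lemma closedNbhd_union_left (G : SimpleGraph V) [DecidableEq V] (I M : Finset V) {u : V}
    (h : u ∈ closedNbhd G ↑I) : u ∈ closedNbhd G ↑(I ∪ M) := by
  rcases h with h | ⟨w, hw, hadj⟩
  · exact Or.inl (by simp at h ⊢; exact Or.inl h)
  · exact Or.inr ⟨w, by simp at hw ⊢; exact Or.inl hw, hadj⟩

lemma closedNbhd_union_right (G : SimpleGraph V) [DecidableEq V] (I M : Finset V) {u : V}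
    (h : u ∈ closedNbhd G ↑M) : u ∈ closedNbhd G ↑(I ∪ M) := by
  rcases h with h | ⟨w, hw, hadj⟩
  · exact Or.inl (by simp at h ⊢; exact Or.inr h)
  · exact Or.inr ⟨w, by simp at hw ⊢; exact Or.inr hw, hadj⟩

lemma build [Fintype V] [DecidableEq V] (G : SimpleGraph V) (r : ℕ) (hr : 3 ≤ r)
    (hfree : K1rFree G r) :
    ∀ l : List V, ∃ I : Finset V, IsIndep G ↑I ∧
      (∀ v ∈ l, ∀ u, u ∈ closedNbhd G {v} → u ∈ closedNbhd G ↑I) ∧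
      I.card ≤ (r - 2) * l.length ∧ I.card ≤ (r - 2) * (l.length - 1) + 1 := by
  classical
  intro l
  induction l with
  | nil =>
    exact ⟨∅, by simp [IsIndep], by simp, by simp, by simp⟩
  | cons v l ih =>
    obtain ⟨I, hIind, hIcov, hc1, hc2⟩ := ih
    set A : Finset V := Finset.univ.filter
      (fun u => u ∈ closedNbhd G ({v} : Set V) ∧ u ∉ closedNbhd G ↑I) with hA
    have hAmem : ∀ u, u ∈ A ↔ (u ∈ closedNbhd G ({v} : Set V) ∧ u ∉ closedNbhd G ↑I) := by
      intro u; simp [hA]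
    -- elements of A other than v are adjacent to v
    have hAadj : ∀ x ∈ A, x ≠ v → G.Adj v x := by
      intro x hx hxv
      rcases ((hAmem x).1 hx).1 with h | ⟨w, hw, hadj⟩
      · exact absurd h hxv
      · rcases hw with rfl; exact hadj
    -- a helper to finish given a suitable M
    have finish : ∀ M : Finset V, M ⊆ A → IsIndep G ↑M →
        (∀ u ∈ A, u ∈ closedNbhd G ↑M) →
        ∃ I' : Finset V, IsIndep G ↑I' ∧
          (∀ w ∈ v :: l, ∀ u, u ∈ closedNbhd G {w} → u ∈ closedNbhd G ↑I') ∧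
          I'.card ≤ I.card + M.card := by
      intro M hMA hMind hMdom
      refine ⟨I ∪ M, ?_, ?_, ?_⟩
      · intro x hx y hy hxy
        simp only [Finset.coe_union, Set.mem_union] at hx hy
        rcases hx with hx | hx <;> rcases hy with hy | hy
        · exact hIind hx hy hxy
        · intro hadj
          exact (((hAmem y).1 (hMA hy)).2) (Or.inr ⟨x, hx, hadj⟩)
        · intro hadj
          exact (((hAmem x).1 (hMA hx)).2) (Or.inr ⟨y, hy, hadj.symm⟩)
        · exact hMind hx hy hxy
      · intro w hw u hu
        rcases List.mem_cons.1 hw with rfl | hw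
        · by_cases huI : u ∈ closedNbhd G ↑I
          · exact closedNbhd_union_left G I M huI
          · exact closedNbhd_union_right G I M (hMdom u ((hAmem u).2 ⟨hu, huI⟩))
        · exact closedNbhd_union_left G I M (hIcov w hw u hu)
      · exact le_trans (Finset.card_union_le I M) (le_refl _)
    by_cases hv : v ∈ closedNbhd G ↑I
    · rcases hv with hvI | ⟨w, hwI, hwv⟩
      · -- v ∈ I : nothing to add
        refine ⟨I, hIind, ?_, ?_, ?_⟩
        · intro w hw u hu
          rcases List.mem_cons.1 hw with rfl | hw
          · rcases hu with rfl | ⟨x, hx, hadj⟩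
            · exact Or.inl hvI
            · rcases hx with rfl
              exact Or.inr ⟨x, hvI, hadj⟩
          · exact hIcov w hw u hu
        · calc I.card ≤ (r-2) * l.length := hc1
            _ ≤ (r-2) * (v :: l).length := by
              apply Nat.mul_le_mul_left; simp
        · calc I.card ≤ (r-2) * l.length := hc1
            _ ≤ (r-2) * ((v :: l).length - 1) + 1 := by simp
      · -- v dominated by neighbor w ∈ I
        obtain ⟨M, _, hMA, hMind, hMdom⟩ :=
          exists_max_indep G (A \ ∅).card A ∅ (le_refl _) (Finset.empty_subset A)
            (by simp [IsIndep])
        have hMne : ∀ x ∈ M, x ≠ v := by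
          intro x hx hxv
          exact ((hAmem x).1 (hMA hx)).2 (hxv ▸ Or.inr ⟨w, hwI, hwv⟩)
        have hMadj : ∀ x ∈ M, G.Adj v x := fun x hx => hAadj x (hMA hx) (hMne x hx)
        have hwM : w ∉ M := by
          intro hwM
          exact ((hAmem w).1 (hMA hwM)).2 (Or.inl hwI)
        have hMcard : M.card ≤ r - 2 := by
          have hL : ∀ x ∈ insert w M, G.Adj v x := by
            intro x hx
            rcases Finset.mem_insert.1 hx with rfl | hx
            · exact hwv.symm
            · exact hMadj x hx
          have hLind : IsIndep G ↑(insert w M) := by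
            rw [Finset.coe_insert]
            apply hMind.insert
            intro x hx _
            have hxnI : ∀ y ∈ I, ¬ G.Adj y x :=
              fun y hy hadj => ((hAmem x).1 (hMA hx)).2 (Or.inr ⟨y, hy, hadj⟩)
            exact ⟨fun h => hxnI w hwI h, fun h => hxnI w hwI h.symm⟩
          have := star_bound G r hfree v (insert w M) hL hLind
          rw [Finset.card_insert_of_notMem hwM] at this
          omega
        have hInonempty : l ≠ [] := by
          intro hl
          subst hl
          simp at hc1
          subst hc1
          simp at hwI
        obtain ⟨I', h1, h2, h3⟩ := finish M hMA hMind hMdom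
        refine ⟨I', h1, h2, ?_, ?_⟩
        · have key : (r-2) * l.length + (r-2) = (r-2) * (v :: l).length := by
            simp [Nat.mul_succ]
          omega
        · have hl1 : 1 ≤ l.length := by
            cases l with
            | nil => exact absurd rfl hInonempty
            | cons a t => simp
          have key : (r-2) * (l.length - 1) + (r-2) = (r-2) * ((v::l).length - 1) := by
            rw [← Nat.mul_succ]
            congr 1
            simp
            omega
          omega
    · -- v not dominated: add v itself
      have hvA : v ∈ A := (hAmem v).2 ⟨Or.inl rfl, hv⟩
      obtain ⟨M, hvM, hMA, hMind, hMdom⟩ :=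
        exists_max_indep G (A \ {v}).card A {v} (le_refl _)
          (Finset.singleton_subset_iff.2 hvA) (by simp [IsIndep])
      have hMeq : M = {v} := by
        apply Finset.Subset.antisymm _ hvM
        intro x hx
        rw [Finset.mem_singleton]
        by_contra hxv
        have hadj : G.Adj v x := hAadj x (hMA hx) hxv
        exact hMind (by simp [hvM (Finset.mem_singleton_self v)])
          (by exact hx) (Ne.symm hxv) hadj
      obtain ⟨I', h1, h2, h3⟩ := finish M hMA hMind hMdom
      have hM1 : M.card = 1 := by rw [hMeq]; simp
      refine ⟨I', h1, h2, ?_, ?_⟩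
      · have key : (r-2) * l.length + (r-2) = (r-2) * (v :: l).length := by
          simp [Nat.mul_succ]
        omega
      · have : (v :: l).length - 1 = l.length := by simp
        rw [this]
        omega

/-- For K_{1,r}-free graphs, ι'_k(G) ≤ (r − 2)(ι_k(G) − 1) + 1. -/
theorem stmt_4 [Fintype V] (G : SimpleGraph V) (r : ℕ) (hr : 3 ≤ r)
    (hfree : K1rFree G r) (k : ℕ) (hk : 0 < k) :
    iota' G k ≤ (r - 2) * (iota G k - 1) + 1 := by
  classical
  have hne : {n | ∃ S : Finset V, S.card = n ∧ IsIsolating G k ↑S}.Nonempty := by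
    refine ⟨(Finset.univ : Finset V).card, Finset.univ, rfl, ?_⟩
    intro T hT hcl hTk
    have hT0 : T = ∅ := by
      rw [Finset.eq_empty_iff_forall_notMem]
      intro t ht
      have hmem : t ∈ (↑T : Set V) ∩ closedNbhd G ↑(Finset.univ : Finset V) :=
        ⟨ht, Or.inl (by simp)⟩
      rw [hT] at hmem
      exact hmem
    subst hT0
    simp at hTk
    omega
  have hiota : iota G k = sInf {n | ∃ S : Finset V, S.card = n ∧ IsIsolating G k ↑S} := rfl
  have hmem := Nat.sInf_mem hne
  obtain ⟨D, hDc, hDiso⟩ := hmem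
  obtain ⟨I, hIind, hIcov, _, hc2⟩ := build G r hr hfree D.toList
  have hsub : closedNbhd G ↑D ⊆ closedNbhd G ↑I := by
    intro u hu
    rcases hu with hu | ⟨w, hw, hadj⟩
    · exact hIcov u (by simpa [Finset.mem_toList] using hu) u (Or.inl rfl)
    · exact hIcov w (by simpa [Finset.mem_toList] using hw) u (Or.inr ⟨w, rfl, hadj⟩)
  have hIiso : IsIsolating G k ↑I := by
    intro T hT hcl
    refine hDiso T ?_ hcl
    rw [Set.eq_empty_iff_forall_notMem]
    rintro x ⟨hx1, hx2⟩
    have hx : x ∈ (↑T : Set V) ∩ closedNbhd G ↑I := ⟨hx1, hsub hx2⟩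
    rw [hT] at hx
    exact hx
  have hle : iota' G k ≤ I.card := Nat.sInf_le ⟨I, rfl, hIiso, hIind⟩
  have hlen : D.toList.length = D.card := Finset.length_toList D
  rw [hlen] at hc2
  calc iota' G k ≤ I.card := hle
    _ ≤ (r - 2) * (D.card - 1) + 1 := hc2
    _ = (r - 2) * (iota G k - 1) + 1 := by rw [hiota, hDc]
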